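/- Let p ≥ 4. For every n ≥ p − 1, the number of permutations σ ∈ S_n with no 1324⋯p-match and exactly one descent equals 2^n − 2n + p − 2. (In particular, for p = 4 and n ≥ 4 this number is 2^n − 2n + 2.) -/

import Mathlib

open scoped Classical

noncomputable section

/-- The number of descents of a permutation of `Fin n` (one-line notation). -/
def desNum {n : ℕ} (σ : Equiv.Perm (Fin n)) : ℕ :=
  (Finset.univ.filter fun i : Fin (n - 1) =>
    σ ⟨(i : ℕ) + 1, by have := i.isLt; omega⟩ < σ ⟨(i : ℕ), by have := i.isLt; omega⟩).card

/-- The number of left-to-right minima of a permutation of `Fin n`. -/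
def lrMin {n : ℕ} (σ : Equiv.Perm (Fin n)) : ℕ :=
  (Finset.univ.filter fun j : Fin n => ∀ i : Fin n, i < j → σ j < σ i).card

/-- `σ` has a (consecutive) `τ`-match: some window of `j` consecutive entries of `σ`
in one-line notation reduces to `τ`, i.e. is order-isomorphic to `τ`. -/
def HasMatch {j n : ℕ} (τ : Equiv.Perm (Fin j)) (σ : Equiv.Perm (Fin n)) : Prop :=
  ∃ (i : ℕ) (h : i + j ≤ n), ∀ a b : Fin j,
    (σ ⟨i + (a : ℕ), by have := a.isLt; omega⟩ < σ ⟨i + (b : ℕ), by have := b.isLt; omega⟩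
      ↔ τ a < τ b)

/-- The pattern `1 3 2 4 5 ⋯ p ∈ S_p`: in (0-indexed) one-line notation, the identity
with the values in positions 1 and 2 interchanged. -/
def tau132 (p : ℕ) (hp : 2 < p) : Equiv.Perm (Fin p) :=
  Equiv.swap ⟨1, by omega⟩ ⟨2, by omega⟩

namespace NoMatchAux

open Finset Equiv

variable {n : ℕ}

/-- The value of `σ` at (natural-number) position `i`, as a natural number. -/
def valAt (σ : Equiv.Perm (Fin n)) (i : ℕ) : ℕ :=
  if h : i < n then (σ ⟨i, h⟩ : ℕ) else 0

lemma valAt_def (σ : Equiv.Perm (Fin n)) {i : ℕ} (h : i < n) :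
    valAt σ i = (σ ⟨i, h⟩ : ℕ) := dif_pos h

lemma valAt_lt_valAt (σ : Equiv.Perm (Fin n)) {i j : ℕ} (hi : i < n) (hj : j < n) :
    valAt σ i < valAt σ j ↔ σ ⟨i, hi⟩ < σ ⟨j, hj⟩ := by
  rw [valAt_def σ hi, valAt_def σ hj, Fin.lt_def]

lemma valAt_inj (σ : Equiv.Perm (Fin n)) {i j : ℕ} (hi : i < n) (hj : j < n)
    (h : valAt σ i = valAt σ j) : i = j := by
  rw [valAt_def σ hi, valAt_def σ hj] at h
  have h2 : σ ⟨i, hi⟩ = σ ⟨j, hj⟩ := Fin.val_injective h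
  have := σ.injective h2
  simpa [Fin.ext_iff] using this

lemma run_lt {σ : Equiv.Perm (Fin n)} {a b : ℕ}
    (hasc : ∀ t, a ≤ t → t + 1 ≤ b → valAt σ t < valAt σ (t + 1)) :
    ∀ i j : ℕ, a ≤ i → i < j → j ≤ b → valAt σ i < valAt σ j := by
  intro i j hai hij hjb
  induction j with
  | zero => omega
  | succ m ih =>
    rcases Nat.lt_or_ge i m with h | h
    · exact (ih h (by omega)).trans (hasc m (by omega) (by omega))
    · have him : i = m := by omega
      subst him
      exact hasc i (by omega) (by omega)

/-- `σ` has its unique descent at `d` (and ascents everywhere else). -/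
def OneDes (σ : Equiv.Perm (Fin n)) (d : ℕ) : Prop :=
  d + 1 < n ∧ valAt σ (d + 1) < valAt σ d ∧
    ∀ t, t + 1 < n → t ≠ d → valAt σ t < valAt σ (t + 1)

lemma desNum_eq_one_iff (σ : Equiv.Perm (Fin n)) :
    desNum σ = 1 ↔ ∃ d, OneDes σ d := by
  rw [desNum, Finset.card_eq_one]
  constructor
  · rintro ⟨x, hx⟩
    refine ⟨(x : ℕ), by omega, ?_, ?_⟩
    · have hmem : x ∈ Finset.univ.filter fun i : Fin (n - 1) =>
          σ ⟨(i : ℕ) + 1, by have := i.isLt; omega⟩ < σ ⟨(i : ℕ), by have := i.isLt; omega⟩ := by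
        rw [hx]; exact Finset.mem_singleton_self x
      rw [Finset.mem_filter] at hmem
      exact (valAt_lt_valAt σ (by omega) (by omega)).mpr hmem.2
    · intro t ht htd
      have hne : valAt σ t ≠ valAt σ (t + 1) := fun h => by
        have := valAt_inj σ (by omega) ht h; omega
      have hnot : ¬ valAt σ (t + 1) < valAt σ t := by
        intro hlt
        have hmem : (⟨t, by omega⟩ : Fin (n - 1)) ∈ Finset.univ.filter fun i : Fin (n - 1) =>
            σ ⟨(i : ℕ) + 1, by have := i.isLt; omega⟩ < σ ⟨(i : ℕ), by have := i.isLt; omega⟩ := by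
          rw [Finset.mem_filter]
          exact ⟨Finset.mem_univ _, (valAt_lt_valAt σ ht (by omega)).mp hlt⟩
        rw [hx, Finset.mem_singleton] at hmem
        exact htd (by simpa [Fin.ext_iff] using hmem)
      omega
  · rintro ⟨d, hd, hdes, hasc⟩
    refine ⟨⟨d, by omega⟩, ?_⟩
    ext i
    simp only [Finset.mem_filter, Finset.mem_univ, true_and, Finset.mem_singleton]
    constructor
    · intro h
      by_contra hne
      have hid : (i : ℕ) ≠ d := fun hh => hne (by simpa [Fin.ext_iff] using hh)
      have h1 := hasc (i : ℕ) (by omega) hid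
      have h2 := (valAt_lt_valAt σ (i := (i : ℕ) + 1) (j := (i : ℕ)) (by omega) (by omega)).mpr h
      omega
    · intro h
      subst h
      exact (valAt_lt_valAt σ (i := d + 1) (j := d) (by omega) (by omega)).mp hdes

lemma oneDes_unique {σ : Equiv.Perm (Fin n)} {d d' : ℕ}
    (h : OneDes σ d) (h' : OneDes σ d') : d = d' := by
  by_contra hne
  have h1 := h.2.2 d' h'.1 (Ne.symm hne)
  have h2 := h'.2.1
  omega

/-- The adjacent transposition `(j, j+1)` as a permutation of `Fin n`. -/
def swapAt (j : ℕ) (h : j + 1 < n) : Equiv.Perm (Fin n) :=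
  Equiv.swap ⟨j, by omega⟩ ⟨j + 1, h⟩

lemma valAt_swapAt {j : ℕ} (h : j + 1 < n) {t : ℕ} (ht : t < n) :
    valAt (swapAt j h) t = if t = j then j + 1 else if t = j + 1 then j else t := by
  rw [valAt_def _ ht, swapAt, Equiv.swap_apply_def]
  simp only [Fin.ext_iff]
  split_ifs <;> simp_all

lemma tau132_val {p : ℕ} (hp : 2 < p) (a : Fin p) :
    ((tau132 p hp) a : ℕ) = if (a : ℕ) = 1 then 2 else if (a : ℕ) = 2 then 1 else (a : ℕ) := by
  rw [tau132, Equiv.swap_apply_def]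
  simp only [Fin.ext_iff]
  split_ifs <;> simp_all

lemma oneDes_swapAt {j : ℕ} (h : j + 1 < n) : OneDes (swapAt j h) j := by
  refine ⟨h, ?_, ?_⟩
  · rw [valAt_swapAt h (by omega), valAt_swapAt h (by omega)]
    split_ifs <;> omega
  · intro t ht htj
    rw [valAt_swapAt h (by omega), valAt_swapAt h (by omega)]
    split_ifs <;> omega

lemma desNum_swapAt {j : ℕ} (h : j + 1 < n) : desNum (swapAt j h) = 1 :=
  (desNum_eq_one_iff _).mpr ⟨j, oneDes_swapAt h⟩

lemma eq_swapAt_of {σ : Equiv.Perm (Fin n)} {d : ℕ} (hd1 : 1 ≤ d) (hd2 : d + 2 < n)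
    (h : OneDes σ d)
    (e1 : valAt σ (d - 1) < valAt σ (d + 1)) (e2 : valAt σ d < valAt σ (d + 2)) :
    σ = swapAt d (by omega) := by
  obtain ⟨m, rfl⟩ : ∃ m, n = m + 1 := ⟨n - 1, by omega⟩
  set s : Equiv.Perm (Fin (m + 1)) := swapAt d (by omega) with hs
  have key : ∀ (t : ℕ) (ht : t < m + 1),
      ((σ (s ⟨t, ht⟩) : ℕ)) = valAt σ (if t = d then d + 1 else if t = d + 1 then d else t) := by
    intro t ht
    have h1 : ((s ⟨t, ht⟩ : Fin (m+1)) : ℕ) = if t = d then d + 1 else if t = d + 1 then d else t := by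
      rw [← valAt_def s ht, hs, valAt_swapAt (by omega) ht]
    have h2 : s ⟨t, ht⟩ = (⟨if t = d then d + 1 else if t = d + 1 then d else t,
        h1 ▸ (s ⟨t, ht⟩).isLt⟩ : Fin (m+1)) := Fin.ext h1
    rw [h2, valAt_def σ]
  have hmono : StrictMono fun x : Fin (m+1) => σ (s x) := by
    rw [Fin.strictMono_iff_lt_succ]
    intro i
    show σ (s (Fin.castSucc i)) < σ (s (Fin.succ i))
    rw [Fin.lt_def]
    have e3 : Fin.castSucc i = (⟨(i : ℕ), by omega⟩ : Fin (m+1)) := Fin.ext rfl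
    have e4 : Fin.succ i = (⟨(i : ℕ) + 1, by omega⟩ : Fin (m+1)) := Fin.ext rfl
    rw [e3, e4, key (i : ℕ) (by omega), key ((i : ℕ) + 1) (by omega)]
    by_cases c1 : (i : ℕ) = d
    · rw [if_pos c1, if_neg (by omega), if_pos (by omega)]
      exact h.2.1
    · by_cases c2 : (i : ℕ) + 1 = d
      · rw [if_neg c1, if_neg (by omega), if_pos c2]
        rw [show (i : ℕ) = d - 1 from by omega]; exact e1
      · by_cases c3 : (i : ℕ) = d + 1
        · rw [if_neg c1, if_pos c3, if_neg (by omega), if_neg (by omega)]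
          rw [show (i : ℕ) + 1 = d + 2 from by omega]; exact e2
        · rw [if_neg c1, if_neg c3, if_neg (by omega), if_neg (by omega)]
          exact h.2.2 (i : ℕ) (by omega) c1
  have hsurj : Function.Surjective fun x : Fin (m+1) => σ (s x) :=
    fun y => ⟨s.symm (σ.symm y), by simp⟩
  have hid : (fun x : Fin (m+1) => σ (s x)) = id := by
    haveI hw : WellFoundedLT (Fin (m+1)) := inferInstance
    exact (@StrictMono.range_inj (Fin (m+1)) (Fin (m+1)) _ _ hw _ _ hmono strictMono_id).mp
      (by rw [Set.range_id, hsurj.range_eq])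
  apply Equiv.ext
  intro x
  have h3 := congrFun hid (s x)
  simp only [id_eq] at h3
  have h4 : s (s x) = x := by rw [hs]; exact Equiv.swap_apply_self _ _ _
  rw [h4] at h3
  exact h3

lemma hasMatch_swapAt {p : ℕ} (hp : 2 < p) {j : ℕ} (hj1 : 1 ≤ j) (hjp : j - 1 + p ≤ n)
    (h : j + 1 < n) : HasMatch (tau132 p hp) (swapAt j h) := by
  refine ⟨j - 1, by omega, ?_⟩
  intro a b
  have key : ∀ (c : Fin p) (hc : j - 1 + (c : ℕ) < n),
      ((swapAt j h ⟨j - 1 + (c : ℕ), hc⟩ : Fin n) : ℕ) = (j - 1) + ((tau132 p hp) c : ℕ) := by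
    intro c hc
    rw [← valAt_def _ hc, valAt_swapAt h hc, tau132_val]
    have hcp := c.isLt
    split_ifs <;> omega
  rw [Fin.lt_def, Fin.lt_def, key a (by have := a.isLt; omega), key b (by have := b.isLt; omega)]
  omega

lemma match_struct {p : ℕ} (hp : 3 < p) (hp' : 2 < p) {σ : Equiv.Perm (Fin n)}
    (hm : HasMatch (tau132 p hp') σ) (h1 : desNum σ = 1) :
    ∃ (j : ℕ) (h : j + 1 < n), 1 ≤ j ∧ j + p ≤ n + 1 ∧ σ = swapAt j h := by
  obtain ⟨i, hin, K⟩ := hm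
  have KV : ∀ a b : ℕ, ∀ (ha : a < p) (hb : b < p),
      (valAt σ (i + a) < valAt σ (i + b) ↔
        ((tau132 p hp') ⟨a, ha⟩ : ℕ) < ((tau132 p hp') ⟨b, hb⟩ : ℕ)) := by
    intro a b ha hb
    have := K ⟨a, ha⟩ ⟨b, hb⟩
    rw [← Fin.lt_def]
    rw [valAt_def σ (i := i + a) (by omega), valAt_def σ (i := i + b) (by omega), ← Fin.lt_def]
    exact this
  have hdes : valAt σ (i + 2) < valAt σ (i + 1) := by
    rw [KV 2 1 (by omega) (by omega), tau132_val, tau132_val]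
    norm_num
  have e1 : valAt σ (i + 0) < valAt σ (i + 2) := by
    rw [KV 0 2 (by omega) (by omega), tau132_val, tau132_val]
    norm_num
  have e2 : valAt σ (i + 1) < valAt σ (i + 3) := by
    rw [KV 1 3 (by omega) (by omega), tau132_val, tau132_val]
    norm_num
  obtain ⟨d, hd⟩ := (desNum_eq_one_iff σ).mp h1
  have hd_eq : d = i + 1 := by
    by_contra hne
    have h4 := hd.2.2 (i + 1) (by omega) (fun hh => hne hh.symm)
    have h5 : valAt σ (i + 1 + 1) = valAt σ (i + 2) := rfl
    omega
  subst hd_eq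
  refine ⟨i + 1, by omega, by omega, by omega, ?_⟩
  have e1' : valAt σ (i + 1 - 1) < valAt σ (i + 1 + 1) := by
    have h0 : i + 1 - 1 = i + 0 := by omega
    rw [h0, show i + 1 + 1 = i + 2 from rfl]; exact e1
  have e2' : valAt σ (i + 1) < valAt σ (i + 1 + 2) := by
    rw [show i + 1 + 2 = i + 3 from rfl]; exact e2
  exact eq_swapAt_of (by omega) (by omega) hd e1' e2'


/-- `A` is not a lower set (initial segment) of `Fin n`. -/
def NonLower (A : Finset (Fin n)) : Prop := ∃ x y : Fin n, x < y ∧ y ∈ A ∧ x ∉ A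

lemma card_le_n (A : Finset (Fin n)) : A.card ≤ n := by
  simpa using A.card_le_univ

lemma card_filter_val_lt (m : ℕ) (hm : m ≤ n) :
    (Finset.univ.filter fun x : Fin n => (x : ℕ) < m).card = m := by
  have h : (Finset.univ.filter fun x : Fin n => (x : ℕ) < m).card = (Finset.range m).card := by
    apply Finset.card_bij (fun (x : Fin n) _ => (x : ℕ))
    · intro a ha
      rw [Finset.mem_filter] at ha
      exact Finset.mem_range.mpr ha.2
    · intro a ha b hb hab
      exact Fin.val_injective hab
    · intro b hb
      rw [Finset.mem_range] at hb
      exact ⟨⟨b, by omega⟩, by simp [hb], rfl⟩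
  rw [h, Finset.card_range]

lemma lower_subset {A B : Finset (Fin n)} (hA : ¬ NonLower A) (hB : ¬ NonLower B)
    (h : A.card ≤ B.card) : A ⊆ B := by
  by_contra hsub
  obtain ⟨a, haA, haB⟩ := Finset.not_subset.mp hsub
  have hBA : B ⊆ A := by
    intro b hb
    rcases lt_trichotomy a b with hab | rfl | hba
    · exact absurd ⟨a, b, hab, hb, haB⟩ hB
    · exact absurd hb haB
    · by_contra hbA
      exact hA ⟨b, a, hba, haA, hbA⟩
  have := Finset.card_le_card hBA
  have hEq : B = A := Finset.eq_of_subset_of_card_le hBA h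
  exact haB (hEq ▸ haA)

lemma card_lower_sets : (Finset.univ.filter fun A : Finset (Fin n) => ¬ NonLower A).card
    = n + 1 := by
  have hmain : (Finset.univ.filter fun A : Finset (Fin n) => ¬ NonLower A).card
      = (Finset.range (n + 1)).card := by
    apply Finset.card_bij (fun (A : Finset (Fin n)) _ => A.card)
    · intro A hA
      exact Finset.mem_range.mpr (by have := card_le_n A; omega)
    · intro A hA B hB hab
      rw [Finset.mem_filter] at hA hB
      exact subset_antisymm (lower_subset hA.2 hB.2 (le_of_eq hab))
        (lower_subset hB.2 hA.2 (le_of_eq hab.symm))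
    · intro b hb
      rw [Finset.mem_range] at hb
      refine ⟨Finset.univ.filter fun x : Fin n => (x : ℕ) < b, ?_, ?_⟩
      · rw [Finset.mem_filter]
        refine ⟨Finset.mem_univ _, ?_⟩
        rintro ⟨x, y, hxy, hy, hx⟩
        rw [Finset.mem_filter] at hy hx
        have hvals : (x : ℕ) < (y : ℕ) := hxy
        simp only [Finset.mem_univ, true_and] at hy hx
        omega
      · exact card_filter_val_lt (n := n) b (by omega)
  rw [hmain, Finset.card_range]

lemma card_nonLower_sets :
    (Finset.univ.filter fun A : Finset (Fin n) => NonLower A).card + (n + 1) = 2 ^ n := by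
  have h := Finset.card_filter_add_card_filter_not
    (s := (Finset.univ : Finset (Finset (Fin n)))) (p := fun A => NonLower A)
  rw [card_lower_sets] at h
  rw [h]
  simp [Fintype.card_finset]

/-- The list of elements of `A` in increasing order, followed by those of `Aᶜ`. -/
def listOf (A : Finset (Fin n)) : List (Fin n) := A.sort (· ≤ ·) ++ Aᶜ.sort (· ≤ ·)

lemma listOf_length (A : Finset (Fin n)) : (listOf A).length = n := by
  simp only [listOf, List.length_append, Finset.length_sort]
  rw [Finset.card_add_card_compl]
  exact Fintype.card_fin n

lemma listOf_nodup (A : Finset (Fin n)) : (listOf A).Nodup := by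
  refine List.Nodup.append (Finset.sort_nodup _ _) (Finset.sort_nodup _ _) ?_
  intro x hx hx'
  rw [Finset.mem_sort] at hx hx'
  exact (Finset.mem_compl.mp hx') hx

lemma listOf_mem (A : Finset (Fin n)) (x : Fin n) : x ∈ listOf A := by
  rw [listOf, List.mem_append, Finset.mem_sort, Finset.mem_sort, Finset.mem_compl]
  tauto

/-- The permutation whose one-line notation is `sort A ++ sort Aᶜ`. -/
def permOfSet (A : Finset (Fin n)) : Equiv.Perm (Fin n) :=
  (finCongr (listOf_length A).symm).trans
    (List.Nodup.getEquivOfForallMemList (listOf A) (listOf_nodup A) (listOf_mem A))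

lemma permOfSet_apply (A : Finset (Fin n)) (i : ℕ) (h : i < n) :
    permOfSet A ⟨i, h⟩ = (listOf A).get ⟨i, by rw [listOf_length]; exact h⟩ := rfl


lemma valAt_permOfSet_lt (A : Finset (Fin n)) {i : ℕ} (hi : i < A.card) :
    valAt (permOfSet A) i
      = ((A.sort (· ≤ ·)).get ⟨i, by rw [Finset.length_sort]; exact hi⟩ : ℕ) := by
  have hin : i < n := lt_of_lt_of_le hi (card_le_n A)
  rw [valAt_def _ hin, permOfSet_apply]
  congr 1
  rw [List.get_eq_getElem, List.get_eq_getElem]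
  exact List.getElem_append_left (bs := Aᶜ.sort (· ≤ ·)) (by rw [Finset.length_sort]; exact hi)

lemma valAt_permOfSet_ge (A : Finset (Fin n)) {i : ℕ} (hi : A.card ≤ i) (hin : i < n) :
    valAt (permOfSet A) i
      = ((Aᶜ.sort (· ≤ ·)).get ⟨i - A.card, by
          rw [Finset.length_sort]
          have := Finset.card_add_card_compl A
          rw [Fintype.card_fin] at this
          omega⟩ : ℕ) := by
  rw [valAt_def _ hin, permOfSet_apply]
  congr 1
  rw [List.get_eq_getElem, List.get_eq_getElem]
  have h1 : (A.sort (· ≤ ·)).length ≤ i := by rw [Finset.length_sort]; exact hi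
  have hc : A.card + Aᶜ.card = n := by
    have := Finset.card_add_card_compl A
    rwa [Fintype.card_fin] at this
  have h2 := List.getElem_append_right (as := A.sort (· ≤ ·)) (bs := Aᶜ.sort (· ≤ ·)) h1
    (h₂ := by rw [List.length_append, Finset.length_sort, Finset.length_sort]; omega)
  rw [show (listOf A)[i]'(by rw [listOf_length A]; exact hin)
      = (A.sort (· ≤ ·) ++ Aᶜ.sort (· ≤ ·))[i]'(by
        rw [List.length_append, Finset.length_sort, Finset.length_sort]; omega) from rfl, h2]
  congr 1
  rw [Finset.length_sort]

lemma oneDes_permOfSet (A : Finset (Fin n)) (h : NonLower A) :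
    OneDes (permOfSet A) (A.card - 1) := by
  obtain ⟨x, y, hxy, hy, hx⟩ := h
  have hk1 : 1 ≤ A.card := Finset.card_pos.mpr ⟨y, hy⟩
  have hcompl : A.card + Aᶜ.card = n := by
    have := Finset.card_add_card_compl A
    rwa [Fintype.card_fin] at this
  have hkc : 1 ≤ Aᶜ.card := Finset.card_pos.mpr ⟨x, Finset.mem_compl.mpr hx⟩
  have hkn : A.card < n := by omega
  refine ⟨by omega, ?_, ?_⟩
  · -- descent at A.card - 1
    obtain ⟨ix, hix⟩ := List.mem_iff_get.mp ((Finset.mem_sort (α := Fin n) (· ≤ ·)).mpr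
      (Finset.mem_compl.mpr hx))
    obtain ⟨iy, hiy⟩ := List.mem_iff_get.mp ((Finset.mem_sort (α := Fin n) (· ≤ ·)).mpr hy)
    have hv1 : valAt (permOfSet A) A.card ≤ (x : ℕ) := by
      rw [valAt_permOfSet_ge A le_rfl (by omega), ← hix]
      refine Fin.le_def.mp ((Finset.pairwise_sort _ _).rel_get_of_le ?_)
      refine Fin.le_def.mpr ?_
      show A.card - A.card ≤ (ix : ℕ)
      omega
    have hv2 : (y : ℕ) ≤ valAt (permOfSet A) (A.card - 1) := by
      rw [valAt_permOfSet_lt A (i := A.card - 1) (by omega), ← hiy]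
      refine Fin.le_def.mp ((Finset.pairwise_sort _ _).rel_get_of_le ?_)
      have hlt : (iy : ℕ) < A.card :=
        lt_of_lt_of_le iy.isLt (le_of_eq (Finset.length_sort _))
      refine Fin.le_def.mpr ?_
      show (iy : ℕ) ≤ A.card - 1
      omega
    have hxy' : (x : ℕ) < (y : ℕ) := hxy
    rw [show A.card - 1 + 1 = A.card from by omega]
    omega
  · intro t ht htd
    rcases Nat.lt_or_ge (t + 1) A.card with hc | hc
    · rw [valAt_permOfSet_lt A (i := t) (by omega), valAt_permOfSet_lt A hc]
      have := (Finset.sortedLT_sort A).strictMono_get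
        (a := ⟨t, by rw [Finset.length_sort]; omega⟩)
        (b := ⟨t + 1, by rw [Finset.length_sort]; exact hc⟩) (by simp [Fin.lt_def])
      exact Fin.lt_def.mp this
    · have htk : A.card ≤ t := by omega
      rw [valAt_permOfSet_ge A htk (by omega), valAt_permOfSet_ge A (by omega) ht]
      have := (Finset.sortedLT_sort Aᶜ).strictMono_get
        (a := ⟨t - A.card, by rw [Finset.length_sort]; omega⟩)
        (b := ⟨t + 1 - A.card, by rw [Finset.length_sort]; omega⟩)
        (by simp only [Fin.lt_def]; omega)
      exact Fin.lt_def.mp this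


lemma permOfSet_apply_lt (A : Finset (Fin n)) {i : ℕ} (hi : i < A.card) (hin : i < n) :
    permOfSet A ⟨i, hin⟩ = (A.sort (· ≤ ·)).get ⟨i, by rw [Finset.length_sort]; exact hi⟩ := by
  rw [permOfSet_apply, List.get_eq_getElem, List.get_eq_getElem]
  exact List.getElem_append_left (bs := Aᶜ.sort (· ≤ ·)) (by rw [Finset.length_sort]; exact hi)

lemma image_permOfSet (A : Finset (Fin n)) :
    (Finset.univ.filter fun i : Fin n => (i : ℕ) < A.card).image (permOfSet A) = A := by
  apply Finset.eq_of_subset_of_card_le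
  · intro x hx
    rw [Finset.mem_image] at hx
    obtain ⟨i, hi, rfl⟩ := hx
    rw [Finset.mem_filter] at hi
    have hi2 : (i : ℕ) < A.card := hi.2
    have hin : (i : ℕ) < n := i.isLt
    have he : i = (⟨(i : ℕ), hin⟩ : Fin n) := rfl
    rw [he, permOfSet_apply_lt A hi2 hin]
    rw [← Finset.mem_sort (α := Fin n) (· ≤ ·)]
    exact List.get_mem _ _
  · rw [Finset.card_image_of_injective _ (permOfSet A).injective,
      card_filter_val_lt A.card (card_le_n A)]

lemma permOfSet_inj {A B : Finset (Fin n)} (hA : NonLower A) (hB : NonLower B)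
    (h : permOfSet A = permOfSet B) : A = B := by
  have h1 := oneDes_permOfSet A hA
  have h2 := oneDes_permOfSet B hB
  rw [h] at h1
  have hc := oneDes_unique h1 h2
  obtain ⟨xa, ya, _, hya, _⟩ := hA
  obtain ⟨xb, yb, _, hyb, _⟩ := hB
  have hA1 : 1 ≤ A.card := Finset.card_pos.mpr ⟨ya, hya⟩
  have hB1 : 1 ≤ B.card := Finset.card_pos.mpr ⟨yb, hyb⟩
  have hcc : A.card = B.card := by omega
  calc A = (Finset.univ.filter fun i : Fin n => (i : ℕ) < A.card).image (permOfSet A) :=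
        (image_permOfSet A).symm
    _ = B := by rw [h, hcc, image_permOfSet B]

lemma exists_nonLower_of_oneDes {σ : Equiv.Perm (Fin n)} {d : ℕ} (h : OneDes σ d) :
    ∃ A : Finset (Fin n), NonLower A ∧ permOfSet A = σ := by
  have hd1 : d + 1 < n := h.1
  set A := (Finset.univ.filter fun i : Fin n => (i : ℕ) ≤ d).image σ with hA
  have hmem : ∀ x : Fin n, x ∈ A ↔ ((σ.symm x : ℕ) ≤ d) := by
    intro x
    rw [hA, Finset.mem_image]
    constructor
    · rintro ⟨i, hi, rfl⟩
      rw [Finset.mem_filter] at hi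
      rw [Equiv.symm_apply_apply]
      exact hi.2
    · intro hx
      exact ⟨σ.symm x, by simp [Finset.mem_filter, hx], Equiv.apply_symm_apply σ x⟩
  have hcard : A.card = d + 1 := by
    rw [hA, Finset.card_image_of_injective _ σ.injective]
    have heq : (Finset.univ.filter fun i : Fin n => (i : ℕ) ≤ d)
        = (Finset.univ.filter fun i : Fin n => (i : ℕ) < d + 1) := by
      apply Finset.filter_congr
      intro i _
      simp [Nat.lt_succ_iff]
    rw [heq, card_filter_val_lt (d + 1) (by omega)]
  have hNL : NonLower A := by
    refine ⟨σ ⟨d + 1, by omega⟩, σ ⟨d, by omega⟩, ?_, ?_, ?_⟩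
    · exact (valAt_lt_valAt σ (by omega) (by omega)).mp h.2.1
    · rw [hmem, Equiv.symm_apply_apply]
    · rw [hmem, Equiv.symm_apply_apply]
      simp
  refine ⟨A, hNL, ?_⟩
  have claim1 : A.sort (· ≤ ·) = List.ofFn (fun i : Fin (d + 1) => σ ⟨(i : ℕ), by omega⟩) := by
    set l1 := List.ofFn (fun i : Fin (d + 1) => σ ⟨(i : ℕ), by omega⟩) with hl1
    have hnd : l1.Nodup := by
      rw [hl1, List.nodup_ofFn]
      intro i j hij
      have := σ.injective hij
      rw [Fin.mk.injEq] at this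
      exact Fin.ext this
    have hts : l1.toFinset = A := by
      ext x
      rw [List.mem_toFinset, hl1, List.mem_ofFn, hmem x]
      constructor
      · rintro ⟨i, rfl⟩
        rw [Equiv.symm_apply_apply]
        exact Nat.lt_succ_iff.mp i.isLt
      · intro hx
        refine ⟨⟨(σ.symm x : ℕ), by omega⟩, ?_⟩
        simp only [Fin.val_mk]
        rw [show (⟨(σ.symm x : ℕ), (σ.symm x).isLt⟩ : Fin n) = σ.symm x from Fin.eta _ _]
        exact Equiv.apply_symm_apply σ x
    rw [← hts]
    refine (List.toFinset_sort (· ≤ ·) hnd).mpr ?_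
    rw [hl1, List.pairwise_ofFn]
    intro i j hij
    have hasc : ∀ t, 0 ≤ t → t + 1 ≤ d → valAt σ t < valAt σ (t + 1) := by
      intro t _ htd
      exact h.2.2 t (by omega) (by omega)
    have hlt := run_lt hasc (i : ℕ) (j : ℕ) (by omega) hij (Nat.lt_succ_iff.mp j.isLt)
    exact le_of_lt ((valAt_lt_valAt σ (by omega) (by omega)).mp hlt)
  have claim2 : Aᶜ.sort (· ≤ ·)
      = List.ofFn (fun i : Fin (n - (d + 1)) => σ ⟨d + 1 + (i : ℕ), by omega⟩) := by
    set l2 := List.ofFn (fun i : Fin (n - (d + 1)) => σ ⟨d + 1 + (i : ℕ), by omega⟩) with hl2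
    have hnd : l2.Nodup := by
      rw [hl2, List.nodup_ofFn]
      intro i j hij
      have := σ.injective hij
      rw [Fin.mk.injEq] at this
      exact Fin.ext (by omega)
    have hts : l2.toFinset = Aᶜ := by
      ext x
      rw [List.mem_toFinset, hl2, List.mem_ofFn, Finset.mem_compl, hmem x]
      constructor
      · rintro ⟨i, rfl⟩
        rw [Equiv.symm_apply_apply]
        simp only [Fin.val_mk]
        omega
      · intro hx
        push_neg at hx
        refine ⟨⟨(σ.symm x : ℕ) - (d + 1), by have := (σ.symm x).isLt; omega⟩, ?_⟩
        simp only [Fin.val_mk]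
        rw [show (⟨d + 1 + ((σ.symm x : ℕ) - (d + 1)), by have := (σ.symm x).isLt; omega⟩ : Fin n)
            = σ.symm x from Fin.ext (by have := (σ.symm x).isLt; simp; omega)]
        exact Equiv.apply_symm_apply σ x
    rw [← hts]
    refine (List.toFinset_sort (· ≤ ·) hnd).mpr ?_
    rw [hl2, List.pairwise_ofFn]
    intro i j hij
    have hasc : ∀ t, d + 1 ≤ t → t + 1 ≤ n - 1 → valAt σ t < valAt σ (t + 1) := by
      intro t htd htn
      exact h.2.2 t (by omega) (by omega)
    have hi2 := i.isLt
    have hj2 := j.isLt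
    have hlt := run_lt hasc (d + 1 + (i : ℕ)) (d + 1 + (j : ℕ)) (by omega) (by
      exact Nat.add_lt_add_left hij (d+1)) (by omega)
    exact le_of_lt ((valAt_lt_valAt σ (by omega) (by omega)).mp hlt)
  apply Equiv.ext
  rintro ⟨i, hin⟩
  rw [permOfSet_apply, List.get_eq_getElem]
  have hll : listOf A = List.ofFn (fun i : Fin (d + 1) => σ ⟨(i : ℕ), by omega⟩)
      ++ List.ofFn (fun i : Fin (n - (d + 1)) => σ ⟨d + 1 + (i : ℕ), by omega⟩) := by
    rw [listOf, claim1, claim2]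
  rw [List.getElem_of_eq hll]
  rcases Nat.lt_or_ge i (d + 1) with hc | hc
  · rw [List.getElem_append_left (by simp [hc])]
    rw [List.getElem_ofFn]
  · rw [List.getElem_append_right (by simp; omega)]
    rw [List.getElem_ofFn]
    apply congrArg
    apply Fin.ext
    simp
    omega


lemma card_oneDes :
    (Finset.univ.filter fun σ : Equiv.Perm (Fin n) => desNum σ = 1).card + (n + 1) = 2 ^ n := by
  have hbij : (Finset.univ.filter fun A : Finset (Fin n) => NonLower A).card
      = (Finset.univ.filter fun σ : Equiv.Perm (Fin n) => desNum σ = 1).card := by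
    apply Finset.card_bij (fun A _ => permOfSet A)
    · intro A hA
      rw [Finset.mem_filter] at hA ⊢
      exact ⟨Finset.mem_univ _, (desNum_eq_one_iff _).mpr ⟨A.card - 1, oneDes_permOfSet A hA.2⟩⟩
    · intro A hA B hB hab
      rw [Finset.mem_filter] at hA hB
      exact permOfSet_inj hA.2 hB.2 hab
    · intro σ hσ
      rw [Finset.mem_filter] at hσ
      obtain ⟨d, hd⟩ := (desNum_eq_one_iff σ).mp hσ.2
      obtain ⟨A, hANL, hAσ⟩ := exists_nonLower_of_oneDes hd
      exact ⟨A, by rw [Finset.mem_filter]; exact ⟨Finset.mem_univ _, hANL⟩, hAσ⟩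
  rw [← hbij]
  exact card_nonLower_sets

/-- Totalized adjacent transposition. -/
def swapPermN (j : ℕ) : Equiv.Perm (Fin n) := if h : j + 1 < n then swapAt j h else 1

lemma card_match (p : ℕ) (hp : 4 ≤ p) (hp' : 2 < p) (hn : p - 1 ≤ n) :
    (Finset.univ.filter fun σ : Equiv.Perm (Fin n) =>
      desNum σ = 1 ∧ HasMatch (tau132 p hp') σ).card + p = n + 1 := by
  have hset : (Finset.univ.filter fun σ : Equiv.Perm (Fin n) =>
      desNum σ = 1 ∧ HasMatch (tau132 p hp') σ)
      = (Finset.Icc 1 (n + 1 - p)).image swapPermN := by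
    ext σ
    rw [Finset.mem_filter, Finset.mem_image]
    constructor
    · rintro ⟨_, h1, hm⟩
      obtain ⟨j, hj, hj1, hjp, rfl⟩ := match_struct (by omega) hp' hm h1
      exact ⟨j, Finset.mem_Icc.mpr ⟨hj1, by omega⟩, by rw [swapPermN, dif_pos hj]⟩
    · rintro ⟨j, hj, rfl⟩
      rw [Finset.mem_Icc] at hj
      have hjn : j + 1 < n := by omega
      rw [swapPermN, dif_pos hjn]
      exact ⟨Finset.mem_univ _, desNum_swapAt hjn,
        hasMatch_swapAt hp' (by omega) (by omega) hjn⟩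
  rw [hset, Finset.card_image_of_injOn, Nat.card_Icc]
  · omega
  · intro a ha b hb hab
    rw [Finset.coe_Icc, Set.mem_Icc] at ha hb
    have han : a + 1 < n := by omega
    have hbn : b + 1 < n := by omega
    rw [swapPermN, dif_pos han, swapPermN, dif_pos hbn] at hab
    have h1 : valAt (swapAt a han) a = valAt (swapAt b hbn) a := by rw [hab]
    rw [valAt_swapAt han (by omega), valAt_swapAt hbn (by omega)] at h1
    split_ifs at h1 <;> omega

end NoMatchAux

open NoMatchAux in
/-- For `p ≥ 4` and `n ≥ p - 1`, the number of permutations of `S_n` with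
no `1324⋯p`-match and exactly one descent equals `2^n - 2n + p - 2`. -/
theorem count_nomatch_one_descent (p : ℕ) (hp : 4 ≤ p) (n : ℕ) (hn : p - 1 ≤ n) :
    (Nat.card {σ : Equiv.Perm (Fin n) //
        ¬ HasMatch (tau132 p (by omega)) σ ∧ desNum σ = 1} : ℤ)
    = 2 ^ n - 2 * n + p - 2 := by
  classical
  have hp2 : (2 : ℕ) < p := by omega
  have hN : Nat.card {σ : Equiv.Perm (Fin n) //
      ¬ HasMatch (tau132 p (by omega : 2 < p)) σ ∧ desNum σ = 1}
      = (Finset.univ.filter fun σ : Equiv.Perm (Fin n) =>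
          ¬ HasMatch (tau132 p hp2) σ ∧ desNum σ = 1).card := by
    rw [Nat.card_eq_fintype_card]
    exact Fintype.card_subtype _
  rw [hN]
  have hsplit := Finset.card_filter_add_card_filter_not
    (s := Finset.univ.filter fun σ : Equiv.Perm (Fin n) => desNum σ = 1)
    (p := fun σ => HasMatch (tau132 p hp2) σ)
  rw [Finset.filter_filter, Finset.filter_filter] at hsplit
  have horder : (Finset.univ.filter fun σ : Equiv.Perm (Fin n) =>
        ¬ HasMatch (tau132 p hp2) σ ∧ desNum σ = 1)
      = (Finset.univ.filter fun σ : Equiv.Perm (Fin n) =>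
        desNum σ = 1 ∧ ¬ HasMatch (tau132 p hp2) σ) := by
    ext σ
    simp only [Finset.mem_filter]
    tauto
  rw [horder]
  have hG := card_match (n := n) p hp hp2 hn
  have hD := card_oneDes (n := n)
  have hX : ((2 : ℤ)) ^ n = ((2 ^ n : ℕ) : ℤ) := by push_cast; ring
  rw [hX]
  omega
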